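/- Let a,b,c,d be points on the unit circle S¹ occurring in this positive order with ac ≠ bd, let f = LIS[a,c,b,d] be the intersection point of the Euclidean lines L[a,c] and L[b,d], and suppose f ≠ 0. If m ∈ J*[a,c] ∩ J*[b,d] is the intersection point of the hyperbolic lines J*[a,c] and J*[b,d], then m·conj(f) ∈ ℝ; that is, f and m are collinear with the origin. -/

import Mathlib

open ComplexConjugate

/-- The intersection point of the Euclidean lines through `a, b` and through `c, d`. -/
noncomputable def LIS (a b c d : ℂ) : ℂ :=
  ((conj a * b - a * conj b) * (c - d) - (conj c * d - c * conj d) * (a - b)) /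
    ((conj a - conj b) * (c - d) - (conj c - conj d) * (a - b))

open scoped Classical in
/-- The hyperbolic line in the unit disk with endpoints `a, c` on the unit circle. -/
noncomputable def Jstar (a c : ℂ) : Set ℂ :=
  if c = -a then
    {z : ℂ | ‖z‖ < 1 ∧ ∃ r : ℝ, z / a = (r : ℂ)}
  else
    {z : ℂ | ‖z‖ < 1 ∧
      ((‖z‖ : ℂ) ^ 2 + 1 =
        conj (2 * (a - c) / (a * conj c - conj a * c)) * z +
          (2 * (a - c) / (a * conj c - conj a * c)) * conj z)}

lemma unit_conj_mul (θ : ℝ) :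
    conj (Complex.exp (Complex.I * θ)) * Complex.exp (Complex.I * θ) = 1 := by
  rw [← Complex.exp_conj, ← Complex.exp_add]
  simp [Complex.conj_I]

lemma abs_sq_add_one_ne (m : ℂ) : (‖m‖ : ℂ) ^ 2 + 1 ≠ 0 := by
  intro h
  have h2 : ‖m‖ ^ 2 + 1 = 0 := by exact_mod_cast h
  nlinarith [sq_nonneg ‖m‖]

/-- From membership in a non-degenerate hyperbolic line, the endpoints differ. -/
lemma jstar_ne (a c m : ℂ)
    (e1 : (‖m‖ : ℂ) ^ 2 + 1 =
        conj (2 * (a - c) / (a * conj c - conj a * c)) * m +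
          (2 * (a - c) / (a * conj c - conj a * c)) * conj m) : a ≠ c := by
  intro h
  rw [h] at e1
  simp at e1
  exact abs_sq_add_one_ne m e1

/-- The clean form of the hyperbolic-line equation. -/
lemma jstar_eq (a c m : ℂ) (ha0 : a ≠ 0) (hc0 : c ≠ 0)
    (ha' : conj a = a⁻¹) (hc' : conj c = c⁻¹)
    (hac2 : a ≠ c) (hac : a + c ≠ 0)
    (e1 : (‖m‖ : ℂ) ^ 2 + 1 =
        conj (2 * (a - c) / (a * conj c - conj a * c)) * m +
          (2 * (a - c) / (a * conj c - conj a * c)) * conj m) :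
    (m * conj m + 1) * (a + c) = 2 * m + 2 * (a * c) * conj m := by
  have habs : (‖m‖ : ℂ) ^ 2 = m * conj m := by
    rw [Complex.mul_conj]; norm_cast; exact Complex.sq_norm m
  rw [habs] at e1
  have hden : a * conj c - conj a * c ≠ 0 := by
    rw [ha', hc']
    have h1 : a * c⁻¹ - a⁻¹ * c = (a - c) * (a + c) / (a * c) := by
      field_simp; ring
    rw [h1]
    exact div_ne_zero (mul_ne_zero (sub_ne_zero.mpr hac2) hac) (mul_ne_zero ha0 hc0)
  have h2 : 2 * (a - c) / (a * conj c - conj a * c) = 2 * a * c / (a + c) := by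
    rw [div_eq_div_iff hden hac, ha', hc']
    field_simp
    ring
  have h3 : conj (2 * (a - c) / (a * conj c - conj a * c)) = 2 / (a + c) := by
    rw [h2, map_div₀, map_mul, map_mul, map_ofNat, ha', hc', map_add, ha', hc']
    rw [div_eq_div_iff _ hac]
    · field_simp; ring
    · have h1 : a⁻¹ + c⁻¹ = (a + c) / (a * c) := by field_simp; ring
      rw [h1]
      exact div_ne_zero hac (mul_ne_zero ha0 hc0)
  rw [h3, h2] at e1
  field_simp at e1
  linear_combination e1

set_option maxHeartbeats 1000000 in
theorem stmt16 (θ₁ θ₂ θ₃ θ₄ : ℝ)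
    (h12 : θ₁ < θ₂) (h23 : θ₂ < θ₃) (h34 : θ₃ < θ₄) (h41 : θ₄ < θ₁ + 2 * Real.pi)
    (a b c d : ℂ)
    (hea : a = Complex.exp (Complex.I * (θ₁ : ℂ)))
    (heb : b = Complex.exp (Complex.I * (θ₂ : ℂ)))
    (hec : c = Complex.exp (Complex.I * (θ₃ : ℂ)))
    (hed : d = Complex.exp (Complex.I * (θ₄ : ℂ)))
    (hnp : a * c ≠ b * d)
    (f : ℂ) (hf : f = LIS a c b d) (hf0 : f ≠ 0)
    (m : ℂ) (hmem : m ∈ Jstar a c ∩ Jstar b d) :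
    ∃ r : ℝ, m * conj f = (r : ℂ) := by
  have hA : conj a * a = 1 := by rw [hea]; exact unit_conj_mul θ₁
  have hB : conj b * b = 1 := by rw [heb]; exact unit_conj_mul θ₂
  have hC : conj c * c = 1 := by rw [hec]; exact unit_conj_mul θ₃
  have hD : conj d * d = 1 := by rw [hed]; exact unit_conj_mul θ₄
  have ha0 : a ≠ 0 := by intro h; rw [h, mul_zero] at hA; exact zero_ne_one hA
  have hb0 : b ≠ 0 := by intro h; rw [h, mul_zero] at hB; exact zero_ne_one hB
  have hc0 : c ≠ 0 := by intro h; rw [h, mul_zero] at hC; exact zero_ne_one hC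
  have hd0 : d ≠ 0 := by intro h; rw [h, mul_zero] at hD; exact zero_ne_one hD
  have ha' : conj a = a⁻¹ := eq_inv_of_mul_eq_one_left hA
  have hb' : conj b = b⁻¹ := eq_inv_of_mul_eq_one_left hB
  have hc' : conj c = c⁻¹ := eq_inv_of_mul_eq_one_left hC
  have hd' : conj d = d⁻¹ := eq_inv_of_mul_eq_one_left hD
  have hne : a * c - b * d ≠ 0 := sub_ne_zero.mpr hnp
  obtain ⟨hm1, hm2⟩ := hmem
  suffices h : conj (m * conj f) = m * conj f by
    exact Complex.conj_eq_iff_real.mp h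
  rw [map_mul, Complex.conj_conj]
  -- goal : conj m * f = m * conj f
  by_cases hca : c = -a
  · rw [Jstar, if_pos hca] at hm1
    by_cases hdb : d = -b
    · -- both lines are diameters : f = 0, contradicting hf0
      exfalso
      apply hf0
      rw [hf]
      unfold LIS
      have hnum : (conj a * c - a * conj c) * (b - d) - (conj b * d - b * conj d) * (a - c) = 0 := by
        rw [hca, hdb, map_neg, map_neg, ha', hb']
        field_simp
        ring
      rw [hnum, zero_div]
    · -- c = -a, d ≠ -b
      rw [Jstar, if_neg hdb] at hm2
      obtain ⟨-, r, hr⟩ := hm1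
      have hm : m = (r : ℂ) * a := by
        field_simp at hr
        rw [hr]
        ring
      obtain ⟨-, e2⟩ := hm2
      have hbd2 : b ≠ d := jstar_ne b d m e2
      have hq : a ^ 2 + b * d ≠ 0 := by
        intro h
        apply hne
        rw [hca]
        linear_combination -h
      have hfval : f = a ^ 2 * (b + d) / (a ^ 2 + b * d) := by
        rw [hf, hca]
        unfold LIS
        rw [map_neg, ha', hb', hd']
        have hDn : (a⁻¹ - -a⁻¹) * (b - d) - (b⁻¹ - d⁻¹) * (a - -a) ≠ 0 := by
          have h1 : (a⁻¹ - -a⁻¹) * (b - d) - (b⁻¹ - d⁻¹) * (a - -a) =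
              2 * (b - d) * (a ^ 2 + b * d) / (a * b * d) := by field_simp; ring
          rw [h1]
          apply div_ne_zero _ (by simp [ha0, hb0, hd0])
          exact mul_ne_zero (mul_ne_zero two_ne_zero (sub_ne_zero.mpr hbd2)) hq
        rw [div_eq_div_iff hDn hq]
        field_simp
        ring
      have hq' : (a⁻¹) ^ 2 + b⁻¹ * d⁻¹ ≠ 0 := by
        have h1 : (a⁻¹) ^ 2 + b⁻¹ * d⁻¹ = (b * d + a ^ 2) / (a ^ 2 * b * d) := by
          field_simp
        rw [h1]
        exact div_ne_zero (by rw [add_comm]; exact hq) (by simp [ha0, hb0, hd0])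
      have hcf : conj f = (b + d) / (a ^ 2 + b * d) := by
        rw [hfval]
        simp only [map_div₀, map_mul, map_add, map_pow, ha', hb', hd']
        rw [div_eq_div_iff hq' hq]
        field_simp
        ring
      rw [hm, map_mul, Complex.conj_ofReal, ha', hcf, hfval]
      field_simp
  · rw [Jstar, if_neg hca] at hm1
    obtain ⟨-, e1⟩ := hm1
    have hac2 : a ≠ c := jstar_ne a c m e1
    have hac : a + c ≠ 0 := fun h => hca (eq_neg_of_add_eq_zero_right h)
    by_cases hdb : d = -b
    · -- d = -b, c ≠ -a
      rw [Jstar, if_pos hdb] at hm2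
      obtain ⟨-, r, hr⟩ := hm2
      have hm : m = (r : ℂ) * b := by
        field_simp at hr
        rw [hr]
        ring
      have hq : b ^ 2 + a * c ≠ 0 := by
        intro h
        apply hne
        rw [hdb]
        linear_combination h
      have hfval : f = b ^ 2 * (a + c) / (b ^ 2 + a * c) := by
        rw [hf, hdb]
        unfold LIS
        rw [map_neg, ha', hb', hc']
        have hDn : (a⁻¹ - c⁻¹) * (b - -b) - (b⁻¹ - -b⁻¹) * (a - c) ≠ 0 := by
          have h1 : (a⁻¹ - c⁻¹) * (b - -b) - (b⁻¹ - -b⁻¹) * (a - c) =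
              -(2 * (a - c) * (b ^ 2 + a * c)) / (a * b * c) := by field_simp; ring
          rw [h1]
          apply div_ne_zero _ (by simp [ha0, hb0, hc0])
          simp only [neg_ne_zero]
          exact mul_ne_zero (mul_ne_zero two_ne_zero (sub_ne_zero.mpr hac2)) hq
        rw [div_eq_div_iff hDn hq]
        field_simp
        ring
      have hq' : (b⁻¹) ^ 2 + a⁻¹ * c⁻¹ ≠ 0 := by
        have h1 : (b⁻¹) ^ 2 + a⁻¹ * c⁻¹ = (a * c + b ^ 2) / (b ^ 2 * a * c) := by
          field_simp
        rw [h1]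
        exact div_ne_zero (by rw [add_comm]; exact hq) (by simp [ha0, hb0, hc0])
      have hcf : conj f = (a + c) / (b ^ 2 + a * c) := by
        rw [hfval]
        simp only [map_div₀, map_mul, map_add, map_pow, ha', hb', hc']
        rw [div_eq_div_iff hq' hq]
        field_simp
        ring
      rw [hm, map_mul, Complex.conj_ofReal, hb', hcf, hfval]
      field_simp
    · -- main case : both lines non-degenerate
      rw [Jstar, if_neg hdb] at hm2
      obtain ⟨-, e2⟩ := hm2
      have hbd2 : b ≠ d := jstar_ne b d m e2
      have hbd : b + d ≠ 0 := fun h => hdb (eq_neg_of_add_eq_zero_right h)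
      have E1 := jstar_eq a c m ha0 hc0 ha' hc' hac2 hac e1
      have E2 := jstar_eq b d m hb0 hd0 hb' hd' hbd2 hbd e2
      have hfval : f = (a * c * (b + d) - b * d * (a + c)) / (a * c - b * d) := by
        rw [hf]
        unfold LIS
        rw [ha', hb', hc', hd']
        have hDn : (a⁻¹ - c⁻¹) * (b - d) - (b⁻¹ - d⁻¹) * (a - c) ≠ 0 := by
          have h1 : (a⁻¹ - c⁻¹) * (b - d) - (b⁻¹ - d⁻¹) * (a - c) =
              (a - c) * (b - d) * (a * c - b * d) / (a * b * c * d) := by field_simp; ring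
          rw [h1]
          apply div_ne_zero _ (by simp [ha0, hb0, hc0, hd0])
          exact mul_ne_zero (mul_ne_zero (sub_ne_zero.mpr hac2) (sub_ne_zero.mpr hbd2)) hne
        rw [div_eq_div_iff hDn hne]
        field_simp
        ring
      have hden' : (a * c)⁻¹ - (b * d)⁻¹ ≠ 0 := by
        have h1 : (a * c)⁻¹ - (b * d)⁻¹ = -(a * c - b * d) / (a * c * (b * d)) := by
          field_simp
          ring
        rw [h1]
        apply div_ne_zero _ (by simp [ha0, hb0, hc0, hd0])
        exact fun h => hne (by linear_combination -h)
      have hcf : conj f = (a + c - b - d) / (a * c - b * d) := by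
        rw [hfval]
        simp only [map_div₀, map_mul, map_add, map_sub, ha', hb', hc', hd']
        rw [show a⁻¹ * c⁻¹ - b⁻¹ * d⁻¹ = (a * c)⁻¹ - (b * d)⁻¹ by
          rw [mul_inv, mul_inv]]
        rw [div_eq_div_iff hden' hne]
        field_simp
        ring
      rw [hcf, hfval]
      rw [mul_div_assoc', mul_div_assoc', div_eq_div_iff hne hne]
      linear_combination (-(b + d) / 2 * (a * c - b * d)) * E1 +
        ((a + c) / 2 * (a * c - b * d)) * E2
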